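/- For every integer r ≥ 4, the formal power series P_r(t) ∈ ℚ⟦t⟧ satisfies: its coefficient of t⁰ is 1, its coefficients of t¹ and t² are 0, its coefficient of t³ is −14(r − 2), and its coefficient of t⁴ is −(r⁴ + 12r³ + 59r² − 696r + 1164)/12. That is, P_r(t) = 1 − 14(r−2)t³ − ((r⁴ + 12r³ + 59r² − 696r + 1164)/12)·t⁴ + O(t⁵). -/

import Mathlib

open PowerSeries Finset

private lemma qchoose3 (n : ℕ) : (n.choose 3 : ℚ) = n * ((n:ℚ)-1) * ((n:ℚ)-2) / 6 := by
  induction n with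
  | zero => norm_num
  | succ n ih =>
    have h : ((n+1).choose 3 : ℚ) = (n.choose 2 : ℚ) + (n.choose 3 : ℚ) := by
      rw [show (3:ℕ) = 2 + 1 from rfl, Nat.choose_succ_succ]; push_cast; ring
    rw [h, Nat.cast_choose_two, ih]; push_cast; ring

private lemma qchoose4 (n : ℕ) : (n.choose 4 : ℚ) = n * ((n:ℚ)-1) * ((n:ℚ)-2) * ((n:ℚ)-3) / 24 := by
  induction n with
  | zero => norm_num
  | succ n ih =>
    have h : ((n+1).choose 4 : ℚ) = (n.choose 3 : ℚ) + (n.choose 4 : ℚ) := by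
      rw [show (4:ℕ) = 3 + 1 from rfl, Nat.choose_succ_succ]; push_cast; ring
    rw [h, qchoose3, ih]; push_cast; ring

private lemma coeff_add_pow' (a k : ℕ) : coeff k ((1 + X : ℚ⟦X⟧)^a) = a.choose k := by
  rw [← Polynomial.coe_one, ← Polynomial.coe_X, ← Polynomial.coe_add, ← Polynomial.coe_pow,
    Polynomial.coeff_coe, Polynomial.coeff_one_add_X_pow]

private lemma coeff_sub_pow' (a k : ℕ) :
    coeff k ((1 - X : ℚ⟦X⟧)^a) = (-1:ℚ)^k * a.choose k := by
  have h1 : rescale (-1 : ℚ) ((1+X)^a) = (1 - X)^a := by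
    rw [map_pow, map_add, map_one, rescale_neg_one_X, ← sub_eq_add_neg]
  rw [← h1, coeff_rescale, coeff_add_pow']

private lemma coeff_inv_sub_pow (m k : ℕ) :
    coeff k (((1 - X : ℚ⟦X⟧)^m)⁻¹) = ((m + k - 1).choose k : ℚ) := by
  cases m with
  | zero =>
    rw [pow_zero, inv_one]
    cases k with
    | zero => simp
    | succ k => simp [Nat.choose_eq_zero_of_lt (by omega : k + 1 - 1 < k + 1)]
  | succ d =>
    have hc : constantCoeff ((1 - X : ℚ⟦X⟧)^(d+1)) ≠ 0 := by simp
    have h : (invOneSubPow ℚ (d+1)).val = ((1 - X : ℚ⟦X⟧)^(d+1))⁻¹ := by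
      rw [PowerSeries.eq_inv_iff_mul_eq_one hc, ← invOneSubPow_inv_eq_one_sub_pow]
      exact (invOneSubPow ℚ (d+1)).val_inv
    rw [← h, invOneSubPow_val_succ_eq_mk_add_choose, coeff_mk]
    rw [show d + 1 + k - 1 = d + k by omega, Nat.choose_symm_add]

private lemma coeff_inv_add_pow (m k : ℕ) :
    coeff k (((1 + X : ℚ⟦X⟧)^m)⁻¹) = (-1:ℚ)^k * ((m + k - 1).choose k : ℚ) := by
  have hc : constantCoeff ((1 + X : ℚ⟦X⟧)^m) ≠ 0 := by simp
  have hc' : constantCoeff ((1 - X : ℚ⟦X⟧)^m) ≠ 0 := by simp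
  have hre : rescale (-1 : ℚ) ((1 - X : ℚ⟦X⟧)^m) = (1 + X)^m := by
    rw [map_pow, map_sub, map_one, rescale_neg_one_X, sub_neg_eq_add]
  have h2 : rescale (-1 : ℚ) (((1 - X : ℚ⟦X⟧)^m)⁻¹) = ((1 + X : ℚ⟦X⟧)^m)⁻¹ := by
    rw [PowerSeries.eq_inv_iff_mul_eq_one hc, ← hre, ← map_mul,
      PowerSeries.inv_mul_cancel _ hc', map_one]
  rw [← h2, coeff_rescale, coeff_inv_sub_pow]

/-- For `r ≥ 4`, the formal power series
`P_r(t) = (1 − t)^{(r²+7r−14)/2} (1 + t)^{(r²+7r−28)/2} · [(t + t²)(t + 6t² + t³)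
+ (1/2)(1 + t)^{4−r} + (1/2)(1 − t)^{−r}(1 + 10t + 20t² + 10t³ + t⁴)]` satisfies
`P_r(t) = 1 − 14(r−2) t³ − ((r⁴ + 12r³ + 59r² − 696r + 1164)/12) t⁴ + O(t⁵)`. -/
theorem P_r_low_order_coefficients (r : ℕ) (hr : 4 ≤ r) :
    let P : PowerSeries ℚ :=
      (1 - X) ^ ((r ^ 2 + 7 * r - 14) / 2) * (1 + X) ^ ((r ^ 2 + 7 * r - 28) / 2) *
        ((X + X ^ 2) * (X + 6 * X ^ 2 + X ^ 3)
          + PowerSeries.C (1 / 2 : ℚ) * ((1 + X) ^ (r - 4))⁻¹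
          + PowerSeries.C (1 / 2 : ℚ) * ((1 - X) ^ r)⁻¹ *
              (1 + 10 * X + 20 * X ^ 2 + 10 * X ^ 3 + X ^ 4))
    PowerSeries.coeff 0 P = 1 ∧
    PowerSeries.coeff 1 P = 0 ∧
    PowerSeries.coeff 2 P = 0 ∧
    PowerSeries.coeff 3 P = -14 * ((r : ℚ) - 2) ∧
    PowerSeries.coeff 4 P =
      -((r : ℚ) ^ 4 + 12 * (r : ℚ) ^ 3 + 59 * (r : ℚ) ^ 2 - 696 * (r : ℚ) + 1164) / 12 := by
  intro P
  set a : ℕ := (r ^ 2 + 7 * r - 14) / 2 with ha_def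
  set b : ℕ := (r ^ 2 + 7 * r - 28) / 2 with hb_def
  set m : ℕ := r - 4 with hm_def
  set w : ℚ := (r : ℚ) with hw_def
  -- arithmetic facts
  have h14 : 14 ≤ r ^ 2 + 7 * r := by nlinarith
  have h28 : 28 ≤ r ^ 2 + 7 * r := by nlinarith
  have heven : 2 ∣ r ^ 2 + 7 * r := by
    rcases Nat.even_or_odd r with ⟨t, rfl⟩ | ⟨t, rfl⟩
    · exact ⟨2 * t ^ 2 + 7 * t, by ring⟩
    · exact ⟨2 * t ^ 2 + 9 * t + 4, by ring⟩
  have ha : (a : ℚ) = (w ^ 2 + 7 * w - 14) / 2 := by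
    have h := Nat.div_mul_cancel (Nat.dvd_sub heven (by norm_num : (2:ℕ) ∣ 14))
    have h2 := congrArg (fun n : ℕ => (n : ℚ)) h
    simp only [Nat.cast_mul, Nat.cast_ofNat, Nat.cast_sub h14] at h2
    push_cast at h2
    rw [ha_def]
    linarith [h2]
  have hb : (b : ℚ) = (w ^ 2 + 7 * w - 28) / 2 := by
    have h := Nat.div_mul_cancel (Nat.dvd_sub heven (by norm_num : (2:ℕ) ∣ 28))
    have h2 := congrArg (fun n : ℕ => (n : ℚ)) h
    simp only [Nat.cast_mul, Nat.cast_ofNat, Nat.cast_sub h28] at h2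
    push_cast at h2
    rw [hb_def]
    linarith [h2]
  have hm : (m : ℚ) = w - 4 := by
    rw [hm_def]; push_cast [Nat.cast_sub hr]; ring
  -- coefficients of the factors
  have hF0 : coeff 0 ((1 - X : ℚ⟦X⟧)^a) = 1 := by rw [coeff_sub_pow']; simp
  have hF1 : coeff 1 ((1 - X : ℚ⟦X⟧)^a) = -((w^2+7*w-14)/2) := by
    rw [coeff_sub_pow', Nat.choose_one_right, ← ha]; ring
  have hF2 : coeff 2 ((1 - X : ℚ⟦X⟧)^a) =
      ((w^2+7*w-14)/2) * ((w^2+7*w-14)/2 - 1) / 2 := by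
    rw [coeff_sub_pow', Nat.cast_choose_two, ← ha]; ring
  have hF3 : coeff 3 ((1 - X : ℚ⟦X⟧)^a) =
      -(((w^2+7*w-14)/2) * ((w^2+7*w-14)/2 - 1) * ((w^2+7*w-14)/2 - 2) / 6) := by
    rw [coeff_sub_pow', qchoose3, ← ha]; ring
  have hF4 : coeff 4 ((1 - X : ℚ⟦X⟧)^a) =
      ((w^2+7*w-14)/2) * ((w^2+7*w-14)/2 - 1) * ((w^2+7*w-14)/2 - 2) * ((w^2+7*w-14)/2 - 3) / 24 := by
    rw [coeff_sub_pow', qchoose4, ← ha]; ring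
  have hG0 : coeff 0 ((1 + X : ℚ⟦X⟧)^b) = 1 := by rw [coeff_add_pow']; simp
  have hG1 : coeff 1 ((1 + X : ℚ⟦X⟧)^b) = (w^2+7*w-28)/2 := by
    rw [coeff_add_pow', Nat.choose_one_right, ← hb]
  have hG2 : coeff 2 ((1 + X : ℚ⟦X⟧)^b) =
      ((w^2+7*w-28)/2) * ((w^2+7*w-28)/2 - 1) / 2 := by
    rw [coeff_add_pow', Nat.cast_choose_two, ← hb]
  have hG3 : coeff 3 ((1 + X : ℚ⟦X⟧)^b) =
      ((w^2+7*w-28)/2) * ((w^2+7*w-28)/2 - 1) * ((w^2+7*w-28)/2 - 2) / 6 := by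
    rw [coeff_add_pow', qchoose3, ← hb]
  have hG4 : coeff 4 ((1 + X : ℚ⟦X⟧)^b) =
      ((w^2+7*w-28)/2) * ((w^2+7*w-28)/2 - 1) * ((w^2+7*w-28)/2 - 2) * ((w^2+7*w-28)/2 - 3) / 24 := by
    rw [coeff_add_pow', qchoose4, ← hb]
  have hI10 : coeff 0 (((1 + X : ℚ⟦X⟧)^m)⁻¹) = 1 := by
    rw [coeff_inv_add_pow]; simp
  have hI11 : coeff 1 (((1 + X : ℚ⟦X⟧)^m)⁻¹) = -(w - 4) := by
    rw [coeff_inv_add_pow, show m + 1 - 1 = m by omega, Nat.choose_one_right, ← hm]; ring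
  have hI12 : coeff 2 (((1 + X : ℚ⟦X⟧)^m)⁻¹) = (w - 3) * (w - 4) / 2 := by
    rw [coeff_inv_add_pow, show m + 2 - 1 = m + 1 by omega, Nat.cast_choose_two]
    push_cast [hm]; ring
  have hI13 : coeff 3 (((1 + X : ℚ⟦X⟧)^m)⁻¹) = -((w - 2) * (w - 3) * (w - 4) / 6) := by
    rw [coeff_inv_add_pow, show m + 3 - 1 = m + 2 by omega, qchoose3]
    push_cast [hm]; ring
  have hI14 : coeff 4 (((1 + X : ℚ⟦X⟧)^m)⁻¹) = (w - 1) * (w - 2) * (w - 3) * (w - 4) / 24 := by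
    rw [coeff_inv_add_pow, show m + 4 - 1 = m + 3 by omega, qchoose4]
    push_cast [hm]; ring
  have hI20 : coeff 0 (((1 - X : ℚ⟦X⟧)^r)⁻¹) = 1 := by
    rw [coeff_inv_sub_pow]; simp
  have hI21 : coeff 1 (((1 - X : ℚ⟦X⟧)^r)⁻¹) = w := by
    rw [coeff_inv_sub_pow, show r + 1 - 1 = r by omega, Nat.choose_one_right]
  have hI22 : coeff 2 (((1 - X : ℚ⟦X⟧)^r)⁻¹) = (w + 1) * w / 2 := by
    rw [coeff_inv_sub_pow, show r + 2 - 1 = r + 1 by omega, Nat.cast_choose_two]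
    push_cast; ring
  have hI23 : coeff 3 (((1 - X : ℚ⟦X⟧)^r)⁻¹) = (w + 2) * (w + 1) * w / 6 := by
    rw [coeff_inv_sub_pow, show r + 3 - 1 = r + 2 by omega, qchoose3]
    push_cast; ring
  have hI24 : coeff 4 (((1 - X : ℚ⟦X⟧)^r)⁻¹) = (w + 3) * (w + 2) * (w + 1) * w / 24 := by
    rw [coeff_inv_sub_pow, show r + 4 - 1 = r + 3 by omega, qchoose4]
    push_cast; ring
  -- the polynomial pieces
  have hq : ((X + X^2) * (X + 6*X^2 + X^3) : ℚ⟦X⟧)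
      = C 1 * X^2 + C 7 * X^3 + C 7 * X^4 + C 1 * X^5 := by
    simp only [map_one, map_ofNat]; ring
  have hw' : ((1 + 10*X + 20*X^2 + 10*X^3 + X^4) : ℚ⟦X⟧)
      = C 1 + C 10 * X^1 + C 20 * X^2 + C 10 * X^3 + C 1 * X^4 := by
    simp only [map_one, map_ofNat]; ring
  have hQ : ∀ k, coeff k ((X + X^2) * (X + 6*X^2 + X^3) : ℚ⟦X⟧)
      = (if k = 2 then (1:ℚ) else 0) + (if k = 3 then 7 else 0)
        + (if k = 4 then 7 else 0) + (if k = 5 then 1 else 0) := by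
    intro k
    rw [hq]; simp [coeff_X_pow]
  have hW : ∀ k, coeff k ((1 + 10*X + 20*X^2 + 10*X^3 + X^4) : ℚ⟦X⟧)
      = (if k = 0 then (1:ℚ) else 0) + (if k = 1 then 10 else 0) + (if k = 2 then 20 else 0)
        + (if k = 3 then 10 else 0) + (if k = 4 then 1 else 0) := by
    intro k
    rw [hw']; simp [coeff_X_pow, coeff_one, coeff_X, mul_ite]
  have expand : ∀ n, coeff n P =
      ∑ i ∈ range (n+1), (∑ j ∈ range (i+1),
          coeff j ((1 - X : ℚ⟦X⟧)^a) * coeff (i - j) ((1 + X : ℚ⟦X⟧)^b)) *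
        (coeff (n - i) ((X + X^2) * (X + 6*X^2 + X^3) : ℚ⟦X⟧)
          + (1/2) * coeff (n - i) (((1 + X : ℚ⟦X⟧)^m)⁻¹)
          + ∑ l ∈ range (n - i + 1), (1/2) * coeff l (((1 - X : ℚ⟦X⟧)^r)⁻¹) *
              coeff (n - i - l) ((1 + 10*X + 20*X^2 + 10*X^3 + X^4) : ℚ⟦X⟧)) := by
    intro n
    show coeff n ((1 - X)^a * (1+X)^b *
      ((X + X ^ 2) * (X + 6 * X ^ 2 + X ^ 3)
          + PowerSeries.C (1 / 2 : ℚ) * ((1 + X) ^ m)⁻¹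
          + PowerSeries.C (1 / 2 : ℚ) * ((1 - X) ^ r)⁻¹ *
              (1 + 10 * X + 20 * X ^ 2 + 10 * X ^ 3 + X ^ 4))) = _
    rw [coeff_mul, Finset.Nat.sum_antidiagonal_eq_sum_range_succ_mk]
    refine Finset.sum_congr rfl fun i _ => ?_
    congr 1
    · rw [coeff_mul, Finset.Nat.sum_antidiagonal_eq_sum_range_succ_mk]
    · rw [map_add, map_add]
      congr 1
      · congr 1
        exact coeff_C_mul _ _ _
      · rw [coeff_mul, Finset.Nat.sum_antidiagonal_eq_sum_range_succ_mk]
        refine Finset.sum_congr rfl fun l _ => ?_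
        rw [coeff_C_mul]
  refine ⟨?_, ?_, ?_, ?_, ?_⟩
  · rw [expand 0]
    simp only [Finset.sum_range_succ, Finset.sum_range_zero, hQ, hW,
      hF0, hF1, hF2, hF3, hF4, hG0, hG1, hG2, hG3, hG4,
      hI10, hI11, hI12, hI13, hI14, hI20, hI21, hI22, hI23, hI24]
    norm_num
  · rw [expand 1]
    simp only [Finset.sum_range_succ, Finset.sum_range_zero, hQ, hW,
      hF0, hF1, hF2, hF3, hF4, hG0, hG1, hG2, hG3, hG4,
      hI10, hI11, hI12, hI13, hI14, hI20, hI21, hI22, hI23, hI24]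
    norm_num
    ring
  · rw [expand 2]
    simp only [Finset.sum_range_succ, Finset.sum_range_zero, hQ, hW,
      hF0, hF1, hF2, hF3, hF4, hG0, hG1, hG2, hG3, hG4,
      hI10, hI11, hI12, hI13, hI14, hI20, hI21, hI22, hI23, hI24]
    norm_num
    ring
  · rw [expand 3]
    simp only [Finset.sum_range_succ, Finset.sum_range_zero, hQ, hW,
      hF0, hF1, hF2, hF3, hF4, hG0, hG1, hG2, hG3, hG4,
      hI10, hI11, hI12, hI13, hI14, hI20, hI21, hI22, hI23, hI24]
    norm_num
    ring
  · rw [expand 4]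
    simp only [Finset.sum_range_succ, Finset.sum_range_zero, hQ, hW,
      hF0, hF1, hF2, hF3, hF4, hG0, hG1, hG2, hG3, hG4,
      hI10, hI11, hI12, hI13, hI14, hI20, hI21, hI22, hI23, hI24]
    norm_num
    ring
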